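/- arXiv:2511.02251 — 7 statements merged into one kernel-verified Lean document; each statement's English description precedes it below -/
import Mathlib

section
/- Let V be an abelian group equipped with an element 1 ∈ V and, for each n ∈ ℤ, a biadditive product V × V → V, (u,v) ↦ u_n v, satisfying: (regularity) for all u,v ∈ V there exists N ∈ ℤ with u_n v = 0 for all n ≥ N; (creation) u_{−1} 1 = u and u_n 1 = 0 for all n ≥ 0; (Jacobi identity) for all u,v,w ∈ V and all m,n,l ∈ ℤ, ∑_{i≥0} (−1)^i binom(l,i) ( u_{m+l−i}(v_{n+i} w) − (−1)^l v_{n+l−i}(u_{m+i} w) ) = ∑_{i≥0} binom(m,i) (u_{l+i} v)_{m+n−i} w, where binom(l,i) denotes the generalized integer binomial coefficient l(l−1)⋯(l−i+1)/i! and all sums have only finitely many nonzero terms; and additionally (commutativity) u_n v = 0 for all u,v ∈ V and all n ≥ 0. Then the product u·v := u_{−1} v makes V a commutative associative unital ring with unit 1, and the additive maps D_m : V → V defined by D_m(v) = v_{−m−1} 1 (m ≥ 0) satisfy D_0 = id, the generalized Leibniz rule D_m(u·v) = ∑_{i+j=m} D_i(u)·D_j(v), and iterativity D_i ∘ D_j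 = binom(i+j,i) D_{i+j}. -/
lemma aux_choose_neg (j i : ℕ) :
    Ring.choose (-(j : ℤ) - 1) i = (-1) ^ i * ((i + j).choose i : ℤ) := by
  apply nsmul_right_injective (M := ℤ) (Nat.factorial_ne_zero i)
  simp only
  rw [← Ring.descPochhammer_eq_factorial_smul_choose, ← Polynomial.eval_eq_smeval]
  have h2 := ascPochhammer_eval_neg_eq_descPochhammer ℤ (-((j : ℤ) + 1)) i
  rw [neg_neg, show ((j : ℤ) + 1) = ((j + 1 : ℕ) : ℤ) by push_cast; ring,
    ← ascPochhammer_eval_cast, ascPochhammer_nat_eq_ascFactorial,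
    Nat.ascFactorial_eq_factorial_mul_choose] at h2
  have h4 : (descPochhammer ℤ i).eval (-(j:ℤ) - 1)
      = (-1)^i * ((i.factorial * (j + i).choose i : ℕ) : ℤ) := by
    have e : (-(j:ℤ)-1) = -((j:ℤ)+1) := by ring
    rw [e]
    have := congrArg (fun x => ((-1:ℤ))^i * x) h2
    rw [← mul_assoc, ← mul_pow] at this
    simpa using this.symm
  rw [h4]
  push_cast
  rw [Nat.add_comm j i]
  ring

lemma aux_choose_neg_one (k : ℕ) : ((-1 : ℤ)) ^ k * Ring.choose (-1 : ℤ) k = 1 := by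
  rw [show (-1 : ℤ) = -(0:ℕ) - 1 by norm_num, aux_choose_neg 0 k]
  rw [← mul_assoc, ← mul_pow]
  simp

/-- A commutative vertex ring is a commutative associative unital
ring with an iterative Hasse–Schmidt derivation.
A vertex ring is given by an abelian group `V`, biadditive `n`-th products
`p n : V → V → V` (`n : ℤ`), and a vacuum `one : V`, satisfying regularity,
creation, and the Jacobi identity (in coefficient form, with generalized
integer binomial coefficients `Ring.choose (l : ℤ) (i : ℕ)`; all sums are
finitely supported, and are expressed via `finsum`).  Assume moreover
commutativity: `u_n v = 0` for all `n ≥ 0`.  Then `u * v := u_{-1} v` makes `V`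
a commutative associative unital ring with unit `one`, and the maps
`D m v = v_{-m-1} 1` satisfy `D 0 = id`, the generalized Leibniz rule for this
product, and iterativity. -/
theorem commutative_vertex_ring_is_iterative_differential_ring
    {V : Type*} [AddCommGroup V] (p : ℤ → V → V → V) (one : V)
    (hadd_left : ∀ (n : ℤ) (u u' v : V), p n (u + u') v = p n u v + p n u' v)
    (hadd_right : ∀ (n : ℤ) (u v v' : V), p n u (v + v') = p n u v + p n u v')
    (hreg : ∀ u v : V, ∃ N : ℤ, ∀ n : ℤ, N ≤ n → p n u v = 0)
    (hcreate₁ : ∀ u : V, p (-1) u one = u)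
    (hcreate₂ : ∀ (u : V) (n : ℤ), 0 ≤ n → p n u one = 0)
    (hjacobi : ∀ (u v w : V) (m n l : ℤ),
      ∑ᶠ i : ℕ, ((-1 : ℤ) ^ i * Ring.choose l i) •
          (p (m + l - i) u (p (n + i) v w)
            - (((-1 : ℤˣ) ^ l : ℤˣ) : ℤ) • p (n + l - i) v (p (m + i) u w))
        = ∑ᶠ i : ℕ, (Ring.choose m i) • p (m + n - i) (p (l + i) u v) w)
    (hcomm : ∀ (u v : V) (n : ℤ), 0 ≤ n → p n u v = 0) :
    -- the product `u * v := u_{-1} v` makes `V` a commutative associative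
    -- unital ring with unit `one` (biadditivity holds by hypothesis):
    (∀ u v : V, p (-1) u v = p (-1) v u) ∧
    (∀ u v w : V, p (-1) (p (-1) u v) w = p (-1) u (p (-1) v w)) ∧
    (∀ u : V, p (-1) one u = u) ∧
    (∀ u : V, p (-1) u one = u) ∧
    (∀ u u' v : V, p (-1) (u + u') v = p (-1) u v + p (-1) u' v) ∧
    (∀ u v v' : V, p (-1) u (v + v') = p (-1) u v + p (-1) u v') ∧
    -- `D 0 = id`:
    (∀ v : V, p (-(0 : ℕ) - 1) v one = v) ∧
    -- generalized Leibniz rule `D m (u * v) = ∑_{i+j=m} (D i u) * (D j v)`: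
    (∀ (m : ℕ) (u v : V),
      p (-(m : ℤ) - 1) (p (-1) u v) one
        = ∑ ij ∈ Finset.HasAntidiagonal.antidiagonal m,
            p (-1) (p (-(ij.1 : ℤ) - 1) u one) (p (-(ij.2 : ℤ) - 1) v one)) ∧
    -- iterativity `D i ∘ D j = binom(i+j,i) • D (i+j)`:
    (∀ (i j : ℕ) (v : V),
      p (-(i : ℤ) - 1) (p (-(j : ℤ) - 1) v one) one
        = ((i + j).choose i) • p (-((i : ℤ) + j) - 1) v one) := by
  -- zero lemmas
  have hzl : ∀ (n : ℤ) (v : V), p n 0 v = 0 := by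
    intro n v
    have := hadd_left n 0 0 v
    rw [add_zero] at this
    exact left_eq_add.mp this
  have hzr : ∀ (n : ℤ) (u : V), p n u 0 = 0 := by
    intro n u
    have := hadd_right n u 0 0
    rw [add_zero] at this
    exact left_eq_add.mp this
  -- commutator formula (Jacobi with l = 0)
  have hcom : ∀ (u v w : V) (m n : ℤ), p m u (p n v w) = p n v (p m u w) := by
    intro u v w m n
    have h := hjacobi u v w m n 0
    have hR : ∑ᶠ i : ℕ, (Ring.choose m i) • p (m + n - i) (p ((0:ℤ) + i) u v) w = 0 := by
      refine (finsum_congr fun i => ?_).trans finsum_zero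
      rw [hcomm u v _ (by omega), hzl, smul_zero]
    rw [hR, finsum_eq_single _ 0 ?side] at h
    case side =>
      intro i hi
      rw [Ring.choose_zero_pos ℤ (Nat.pos_of_ne_zero hi), mul_zero, zero_smul]
    · simp only [Nat.cast_zero, pow_zero, Ring.choose_zero_right, one_mul, add_zero, sub_zero,
        zpow_zero, Units.val_one, one_smul, one_zsmul] at h
      exact sub_eq_zero.mp h
  -- star formula (Jacobi with m = 0)
  have hstar : ∀ (u v w : V) (n l : ℤ), p n (p l u v) w
      = ∑ᶠ i : ℕ, ((-1 : ℤ) ^ i * Ring.choose l i) • p (l - i) u (p (n + i) v w) := by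
    intro u v w n l
    have h := hjacobi u v w 0 n l
    have hL : ∑ᶠ i : ℕ, ((-1 : ℤ) ^ i * Ring.choose l i) •
          (p ((0:ℤ) + l - i) u (p (n + i) v w)
            - (((-1 : ℤˣ) ^ l : ℤˣ) : ℤ) • p (n + l - i) v (p ((0:ℤ) + i) u w))
        = ∑ᶠ i : ℕ, ((-1 : ℤ) ^ i * Ring.choose l i) • p (l - i) u (p (n + i) v w) := by
      refine finsum_congr fun i => ?_
      rw [hcomm u w _ (by omega), hzr, smul_zero, sub_zero, zero_add]
    have hR : ∑ᶠ i : ℕ, (Ring.choose (0:ℤ) i) • p ((0:ℤ) + n - i) (p (l + i) u v) w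
        = (Ring.choose (0:ℤ) 0) • p ((0:ℤ) + n - ((0:ℕ):ℤ)) (p (l + ((0:ℕ):ℤ)) u v) w := by
      refine finsum_eq_single _ 0 fun i hi => ?_
      rw [Ring.choose_zero_pos ℤ (Nat.pos_of_ne_zero hi), zero_smul]
    rw [hL, hR] at h
    simp only [Nat.cast_zero, add_zero, sub_zero, zero_add, Ring.choose_zero_right,
      one_smul] at h
    rw [← h]
  -- commutativity of the product
  have hP : ∀ u v : V, p (-1) u v = p (-1) v u := by
    intro u v
    have := hcom u v one (-1) (-1)
    rwa [hcreate₁, hcreate₁] at this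
  -- left unit
  have hLU : ∀ u : V, p (-1) one u = u := fun u => by rw [hP, hcreate₁]
  -- translation formula
  have hD : ∀ (m : ℤ) (u v : V), p m u v = p (-1) v (p m u one) := by
    intro m u v
    have := hcom u v one m (-1)
    rwa [hcreate₁] at this
  -- vacuum: p s one one = 0 for s ≤ -2
  have hone : ∀ t : ℕ, p (-(t : ℤ) - 2) one one = 0 := by
    intro t
    induction t using Nat.strong_induction_on with
    | _ t IH =>
      have h := hstar one one one (-(t : ℤ) - 2) (-1)
      rw [hcreate₁] at h
      simp only [aux_choose_neg_one, one_smul] at h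
      rw [finsum_eq_sum_of_support_subset _
        (s := ({0, t + 1} : Finset ℕ)) ?supp] at h
      case supp =>
        intro i hi
        simp only [Function.mem_support] at hi
        simp only [Finset.coe_insert, Finset.coe_singleton, Set.mem_insert_iff,
          Set.mem_singleton_iff]
        by_contra hcon
        push_neg at hcon
        obtain ⟨h0, h1⟩ := hcon
        rcases lt_or_ge i (t + 1) with hlt | hge
        · -- 1 ≤ i ≤ t : use IH
          have hi1 : 1 ≤ i := Nat.one_le_iff_ne_zero.mpr h0
          have e : (-(t : ℤ) - 2 + i) = -((t - i : ℕ) : ℤ) - 2 := by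
            have : i ≤ t := by omega
            push_cast [this]
            ring
          rw [e, IH (t - i) (by omega), hzr] at hi
          exact hi rfl
        · -- i ≥ t + 2
          rw [hcomm one one _ (by omega), hzr] at hi
          exact hi rfl
      rw [Finset.sum_pair (by omega : (0:ℕ) ≠ t + 1)] at h
      have e0 : (-1 - ((0:ℕ):ℤ)) = -1 := by norm_num
      have e0' : (-(t:ℤ) - 2 + ((0:ℕ):ℤ)) = -(t:ℤ) - 2 := by push_cast; ring
      have e1 : (-(t:ℤ) - 2 + ((t+1:ℕ):ℤ)) = -1 := by push_cast; ring
      have e1' : (-1 - ((t+1:ℕ):ℤ)) = -(t:ℤ) - 2 := by push_cast; ring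
      rw [e0, e0', e1, e1', hLU, hcreate₁] at h
      exact left_eq_add.mp h
  -- p s one v = 0 for s ≤ -2
  have honev : ∀ (t : ℕ) (v : V), p (-(t : ℤ) - 2) one v = 0 := by
    intro t v
    rw [hD, hone, hzr]
  refine ⟨hP, ?assoc, hLU, hcreate₁, hadd_left (-1), hadd_right (-1), ?d0, ?leib, ?iter⟩
  case assoc =>
    intro u v w
    have h := hstar u v w (-1) (-1)
    rw [finsum_eq_single _ 0 ?side3] at h
    case side3 =>
      intro i hi
      rw [hcomm v w _ (by omega : (0:ℤ) ≤ -1 + i), hzr, smul_zero]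
    · simpa using h
  case d0 =>
    intro v
    have : (-((0:ℕ):ℤ) - 1) = -1 := by norm_num
    rw [this, hcreate₁]
  case leib =>
    intro m u v
    have h := hstar u v one (-(m : ℤ) - 1) (-1)
    simp only [aux_choose_neg_one, one_smul] at h
    rw [finsum_eq_sum_of_support_subset _ (s := Finset.range (m + 1)) ?supp2] at h
    case supp2 =>
      intro i hi
      simp only [Function.mem_support] at hi
      simp only [Finset.coe_range, Set.mem_Iio]
      by_contra hcon
      rw [hcreate₂ v _ (by omega), hzr] at hi
      exact hi rfl
    rw [h, Finset.Nat.sum_antidiagonal_eq_sum_range_succ_mk]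
    refine Finset.sum_congr rfl fun k hk => ?_
    have hkm : k ≤ m := by
      simpa using Nat.lt_succ_iff.mp (Finset.mem_range.mp hk)
    have e : (-(m:ℤ) - 1 + k) = -((m - k : ℕ) : ℤ) - 1 := by push_cast [hkm]; ring
    have e2 : (-1 - (k:ℤ)) = -(k:ℤ) - 1 := by ring
    rw [e, e2, hD (-(k:ℤ) - 1) u, hP]
  case iter =>
    intro i j v
    have h := hstar v one one (-(i : ℤ) - 1) (-(j : ℤ) - 1)
    rw [finsum_eq_single _ i ?side4] at h
    case side4 =>
      intro k hk
      rcases lt_or_ge k i with hlt | hge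
      · have e : (-(i : ℤ) - 1 + k) = -((i - k - 1 : ℕ) : ℤ) - 2 := by
          push_cast [Nat.cast_sub (by omega : k + 1 ≤ i), Nat.cast_sub (by omega : k ≤ i)]
          omega
        rw [e, hone, hzr, smul_zero]
      · have hgt : i < k := lt_of_le_of_ne hge (fun h' => hk h'.symm)
        rw [hcomm one one _ (by omega : (0:ℤ) ≤ -(i:ℤ) - 1 + k), hzr, smul_zero]
    · have e : (-(i : ℤ) - 1 + (i:ℕ)) = -1 := by ring
      rw [e, hcreate₁, aux_choose_neg] at h
      rw [← mul_assoc, ← mul_pow] at h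
      simp only [neg_mul_neg, one_mul, one_pow] at h
      have e2 : (-(j:ℤ) - 1 - (i:ℕ)) = -((i:ℤ) + j) - 1 := by push_cast; ring
      rw [e2, natCast_zsmul] at h
      exact h
end

section
/- Let V be an abelian group equipped with an element 1 ∈ V and, for each n ∈ ℤ, a biadditive product V × V → V, (u,v) ↦ u_n v, satisfying: (regularity) for all u,v ∈ V there exists N ∈ ℤ with u_n v = 0 for all n ≥ N; (creation) u_{−1} 1 = u and u_n 1 = 0 for all n ≥ 0; and (Jacobi identity) for all u,v,w ∈ V and all m,n,l ∈ ℤ, ∑_{i≥0} (−1)^i binom(l,i) ( u_{m+l−i}(v_{n+i} w) − (−1)^l v_{n+l−i}(u_{m+i} w) ) = ∑_{i≥0} binom(m,i) (u_{l+i} v)_{m+n−i} w, where binom(l,i) denotes the generalized integer binomial coefficient l(l−1)⋯(l−i+1)/i! and all sums have only finitely many nonzero terms. Then the additive maps D_m : V → V defined by D_m(v) = v_{−m−1} 1 (m ≥ 0) satisfy: D_0 = id; D_m(u_n v) = ∑_{i+j=m} (D_i u)_n (D_j v) for all u,v ∈ V, n ∈ ℤ, m ≥ 0; and D_i ∘ D_j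 = binom(i+j,i) D_{i+j} for all i,j ≥ 0. -/
lemma ringChoose_neg_vr (a k : ℕ) :
    Ring.choose (-(a:ℤ)-1) k = (-1:ℤ)^k * ((a+k).choose k : ℤ) := by
  have h := Ring.descPochhammer_eq_factorial_smul_choose (R := ℤ) (-(a:ℤ)-1) k
  rw [← Polynomial.eval_eq_smeval, descPochhammer_eval_eq_ascPochhammer] at h
  have e1 : (-(a:ℤ)-1 - k + 1) = -((a+k : ℕ) : ℤ) := by push_cast; ring
  rw [e1, ascPochhammer_eval_neg_eq_descPochhammer, descPochhammer_eval_eq_descFactorial,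
    Nat.descFactorial_eq_factorial_mul_choose, nsmul_eq_mul] at h
  have hk : ((k.factorial : ℤ)) ≠ 0 := by exact_mod_cast k.factorial_ne_zero
  apply mul_left_cancel₀ hk
  rw [← h]; push_cast; ring

/-- The canonical Hasse–Schmidt derivation of a vertex ring.
A vertex ring is given by an abelian group `V`, biadditive `n`-th products
`p n : V → V → V` (`n : ℤ`), and a vacuum `one : V`, satisfying regularity,
creation, and the Jacobi identity (in coefficient form, with generalized
integer binomial coefficients `Ring.choose (l : ℤ) (i : ℕ)`; all sums are
finitely supported, and are expressed via `finsum`).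
Then the maps `D m v = v_{-m-1} 1` satisfy `D 0 = id`, the generalized Leibniz
rule for every `n`-th product, and iterativity. -/
theorem vertex_ring_canonical_hasse_schmidt
    {V : Type*} [AddCommGroup V] (p : ℤ → V → V → V) (one : V)
    (hadd_left : ∀ (n : ℤ) (u u' v : V), p n (u + u') v = p n u v + p n u' v)
    (hadd_right : ∀ (n : ℤ) (u v v' : V), p n u (v + v') = p n u v + p n u v')
    (hreg : ∀ u v : V, ∃ N : ℤ, ∀ n : ℤ, N ≤ n → p n u v = 0)
    (hcreate₁ : ∀ u : V, p (-1) u one = u)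
    (hcreate₂ : ∀ (u : V) (n : ℤ), 0 ≤ n → p n u one = 0)
    (hjacobi : ∀ (u v w : V) (m n l : ℤ),
      ∑ᶠ i : ℕ, ((-1 : ℤ) ^ i * Ring.choose l i) •
          (p (m + l - i) u (p (n + i) v w)
            - (((-1 : ℤˣ) ^ l : ℤˣ) : ℤ) • p (n + l - i) v (p (m + i) u w))
        = ∑ᶠ i : ℕ, (Ring.choose m i) • p (m + n - i) (p (l + i) u v) w) :
    (∀ v : V, p (-(0 : ℕ) - 1) v one = v) ∧
    (∀ (m : ℕ) (n : ℤ) (u v : V),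
      p (-(m : ℤ) - 1) (p n u v) one
        = ∑ ij ∈ Finset.HasAntidiagonal.antidiagonal m,
            p n (p (-(ij.1 : ℤ) - 1) u one) (p (-(ij.2 : ℤ) - 1) v one)) ∧
    (∀ (i j : ℕ) (v : V),
      p (-(i : ℤ) - 1) (p (-(j : ℤ) - 1) v one) one
        = ((i + j).choose i) • p (-((i : ℤ) + j) - 1) v one) := by
  -- products with zero vanish
  have pz_right : ∀ (n : ℤ) (u : V), p n u 0 = 0 := by
    intro n u
    have h := hadd_right n u 0 0
    rw [add_zero] at h
    exact (left_eq_add.mp h)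
  have pz_left : ∀ (n : ℤ) (w : V), p n 0 w = 0 := by
    intro n w
    have h := hadd_left n 0 0 w
    rw [add_zero] at h
    exact (left_eq_add.mp h)
  -- left multiplication by the vacuum commutes with all products
  have C1 : ∀ (u w : V) (m n : ℤ), p m u (p n one w) = p n one (p m u w) := by
    intro u w m n
    have J := hjacobi u one w m n 0
    have hR : ∑ᶠ i : ℕ, (Ring.choose m i) • p (m + n - i) (p (0 + i) u one) w = 0 := by
      apply finsum_eq_zero_of_forall_eq_zero
      intro i
      rw [hcreate₂ u (0 + i) (by positivity), pz_left, smul_zero]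
    rw [hR, finsum_eq_single _ 0 (fun i hi => by
      rw [Ring.choose_zero_pos ℤ (Nat.pos_of_ne_zero hi), mul_zero, zero_smul])] at J
    simp only [Nat.cast_zero, add_zero, sub_zero, pow_zero, Ring.choose_zero_right, one_mul,
      one_smul, zpow_zero, Units.val_one] at J
    exact sub_eq_zero.mp J
  have vacmul : ∀ (u : V) (n : ℤ), p n one u = p (-1) u (p n one one) := by
    intro u n
    rw [← hcreate₁ u, ← C1 u one (-1) n, hcreate₁ u]
  have leftid : ∀ w : V, p (-1) one w = w := by
    intro w
    rw [vacmul w (-1), hcreate₁, hcreate₁]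
  have hcneg1 : ∀ i : ℕ, (-1:ℤ)^i * Ring.choose (-1:ℤ) i = 1 := by
    intro i
    have h := ringChoose_neg_vr 0 i
    norm_num at h
    rw [h, ← mul_pow]; norm_num
  -- the key consequence of the Jacobi identity
  have dagger : ∀ (M : ℕ) (np : ℤ) (u v : V),
      p (-(M:ℤ)-1) (p np u v) one
        = ∑ i ∈ Finset.range (M+1),
            ((-1:ℤ)^i * Ring.choose np i) • p (np - i) u (p (-(M:ℤ)-1 + i) v one) := by
    intro M np u v
    have J := hjacobi u v one 0 (-(M:ℤ)-1) np
    rw [finsum_eq_single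
      (fun i : ℕ => Ring.choose (0:ℤ) i • p (0 + (-(M:ℤ)-1) - i) (p (np + i) u v) one) 0
      (fun i hi => by
        rw [Ring.choose_zero_pos ℤ (Nat.pos_of_ne_zero hi), zero_smul])] at J
    simp only [Nat.cast_zero, add_zero, sub_zero, zero_add, Ring.choose_zero_right, one_smul] at J
    rw [← J]
    have hfg : ∀ i : ℕ, ((-1:ℤ)^i * Ring.choose np i) •
        (p (np - i) u (p (-(M:ℤ)-1 + i) v one)
          - (((-1 : ℤˣ) ^ np : ℤˣ) : ℤ) • p (-(M:ℤ)-1 + np - i) v (p i u one))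
        = ((-1:ℤ)^i * Ring.choose np i) • p (np - i) u (p (-(M:ℤ)-1 + i) v one) := by
      intro i
      rw [hcreate₂ u i (by positivity), pz_right, smul_zero, sub_zero]
    rw [finsum_congr hfg]
    apply finsum_eq_sum_of_support_subset
    intro i hi
    simp only [Function.mem_support] at hi
    simp only [Finset.coe_range, Set.mem_Iio]
    by_contra h
    push_neg at h
    apply hi
    rw [hcreate₂ v _ (by omega), pz_right, smul_zero]
  -- the vacuum is annihilated by the Hasse-Schmidt derivations
  have vac0 : ∀ M : ℕ, 0 < M → p (-(M:ℤ)-1) one one = 0 := by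
    intro M
    induction M using Nat.strong_induction_on with
    | _ M ih =>
      intro hM
      obtain ⟨M', rfl⟩ : ∃ M', M = M' + 1 := ⟨M - 1, by omega⟩
      have key := dagger (M' + 1) (-1) one one
      rw [hcreate₁ one] at key
      simp only [hcneg1, one_smul] at key
      rw [Finset.sum_range_succ, Finset.sum_range_succ'] at key
      have hmid : ∑ i ∈ Finset.range M',
          p (-1 - ((i+1 : ℕ) : ℤ)) one (p (-((M'+1 : ℕ):ℤ) - 1 + ((i+1 : ℕ):ℤ)) one one)
            = 0 := by
        apply Finset.sum_eq_zero
        intro i hi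
        simp only [Finset.mem_range] at hi
        have h1 : (-((M'+1 : ℕ):ℤ) - 1 + ((i+1 : ℕ):ℤ)) = -(((M' - i : ℕ)):ℤ) - 1 := by
          push_cast; omega
        rw [h1, ih (M' - i) (by omega) (by omega), pz_right]
      rw [hmid, zero_add] at key
      have h0 : (-((M'+1 : ℕ):ℤ) - 1 + ((0 : ℕ):ℤ)) = -((M'+1 : ℕ):ℤ) - 1 := by
        push_cast; ring
      have hM'' : (-1 - ((M'+1 : ℕ):ℤ)) = -((M'+1 : ℕ):ℤ) - 1 := by ring
      have hMin : (-((M'+1 : ℕ):ℤ) - 1 + ((M'+1 : ℕ):ℤ)) = -1 := by ring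
      rw [h0, hM'', hMin, hcreate₁ one] at key
      simp only [Nat.cast_zero, sub_zero, leftid] at key
      exact add_eq_left.mp key.symm
  -- the vacuum acts as the identity
  have V1 : ∀ (n : ℤ) (w : V), p n one w = if n = -1 then w else 0 := by
    intro n w
    by_cases hn : n = -1
    · rw [if_pos hn, hn, leftid]
    · rw [if_neg hn]
      have h11 : p n one one = 0 := by
        rcases le_or_gt 0 n with h | h
        · exact hcreate₂ one n h
        · have hMn : n = -(((-n-1).toNat : ℕ) : ℤ) - 1 := by omega
          rw [hMn]
          exact vac0 _ (by omega)
      rw [vacmul w n, h11, pz_right]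
  -- translation covariance: products of translated elements
  have A : ∀ (j : ℕ) (n : ℤ) (u w : V),
      p n (p (-(j:ℤ)-1) u one) w = ((-1:ℤ)^j * Ring.choose n j) • p (n - j) u w := by
    intro j n u w
    have hs : ((((-1 : ℤˣ) ^ (-(j:ℤ) - 1) : ℤˣ)) : ℤ) = (-1:ℤ)^(j+1) := by
      have e : (-(j:ℤ) - 1) = -((j+1 : ℕ) : ℤ) := by push_cast; ring
      rw [e, zpow_neg, zpow_natCast, ← inv_pow, Int.units_inv_eq_self]
      push_cast
      norm_num
    have J := hjacobi u one w 0 n (-(j:ℤ)-1)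
    rw [finsum_eq_single
      (fun i : ℕ => Ring.choose (0:ℤ) i • p (0 + n - i) (p (-(j:ℤ)-1 + i) u one) w) 0
      (fun i hi => by
        rw [Ring.choose_zero_pos ℤ (Nat.pos_of_ne_zero hi), zero_smul])] at J
    simp only [Nat.cast_zero, add_zero, sub_zero, zero_add, Ring.choose_zero_right, one_smul,
      zero_sub, hs] at J
    rw [← J]
    clear J
    rcases lt_or_ge n 0 with hn | hn
    · set a := (-n-1).toNat with hadef
      have ha : (a:ℤ) = -n-1 := by omega
      rw [finsum_eq_single _ a (fun i hi => by
        rw [V1 (n + i) w, if_neg (by omega), pz_right,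
          V1 (n + (-(j:ℤ)-1) - i) _, if_neg (by omega), smul_zero, sub_zero, smul_zero])]
      rw [V1 (n + a) w, if_pos (by omega),
        V1 (n + (-(j:ℤ)-1) - a) _, if_neg (by omega), smul_zero, sub_zero]
      have hidx : ((-(j:ℤ)-1) - a) = n - j := by omega
      rw [hidx]
      congr 1
      have hn' : n = -(a:ℤ)-1 := by omega
      rw [hn', ringChoose_neg_vr j a, ringChoose_neg_vr a j]
      have e1 : (-1:ℤ)^a * ((-1:ℤ)^a * ((j+a).choose a : ℤ)) = ((j+a).choose a : ℤ) := by
        rw [← mul_assoc, ← mul_pow]; norm_num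
      have e2 : (-1:ℤ)^j * ((-1:ℤ)^j * ((a+j).choose j : ℤ)) = ((a+j).choose j : ℤ) := by
        rw [← mul_assoc, ← mul_pow]; norm_num
      rw [e1, e2]
      norm_cast
      rw [add_comm j a]
      have h := Nat.choose_symm (Nat.le_add_right a j)
      simpa using h.symm
    · lift n to ℕ using hn with nn
      rcases le_or_gt j nn with hj | hj
      · set i₂ := nn - j with hi2def
        have hi2 : (i₂ : ℤ) = (nn : ℤ) - j := by omega
        rw [finsum_eq_single _ i₂ (fun i hi => by
          rw [V1 ((nn:ℤ) + i) w, if_neg (by omega), pz_right,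
            V1 ((nn:ℤ) + (-(j:ℤ)-1) - i) _, if_neg (by omega), smul_zero, sub_zero, smul_zero])]
        rw [V1 ((nn:ℤ) + i₂) w, if_neg (by omega), pz_right,
          V1 ((nn:ℤ) + (-(j:ℤ)-1) - i₂) _, if_pos (by omega), zero_sub, smul_neg, smul_smul,
          ← neg_smul]
        rw [hi2]
        congr 1
        rw [ringChoose_neg_vr j i₂, Ring.choose_natCast]
        have hnn : j + i₂ = nn := by omega
        rw [hnn, show nn.choose i₂ = nn.choose j by rw [hi2def, Nat.choose_symm hj]]
        have e1 : ((-1:ℤ))^i₂ * (-1:ℤ)^i₂ = 1 := by rw [← mul_pow]; norm_num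
        linear_combination ((-1:ℤ)^j * (nn.choose j : ℤ)) * e1
      · rw [Ring.choose_natCast, Nat.choose_eq_zero_of_lt hj]
        push_cast
        rw [mul_zero, zero_smul]
        apply finsum_eq_zero_of_forall_eq_zero
        intro i
        rw [V1 ((nn:ℤ) + i) w, if_neg (by omega), pz_right,
          V1 ((nn:ℤ) + (-(j:ℤ)-1) - i) _, if_neg (by omega), smul_zero, sub_zero, smul_zero]
  -- assemble the three statements
  refine ⟨?_, ?_, ?_⟩
  · intro v; simpa using hcreate₁ v
  · intro m n u v
    rw [dagger m n u v, Finset.Nat.sum_antidiagonal_eq_sum_range_succ_mk]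
    apply Finset.sum_congr rfl
    intro i hi
    simp only [Finset.mem_range] at hi
    rw [A i n u]
    have hidx : (-(m:ℤ)-1 + i) = -(((m - i : ℕ)):ℤ)-1 := by omega
    rw [hidx]
  · intro i j v
    rw [A j (-(i:ℤ)-1) v one, ringChoose_neg_vr i j]
    have hsign : ((-1:ℤ)^j * ((-1:ℤ)^j * ((i+j).choose j : ℤ))) = ((i+j).choose i : ℤ) := by
      have hcs : (i+j).choose j = (i+j).choose i := by
        have h := Nat.choose_symm (Nat.le_add_right i j)
        simpa using h
      rw [← mul_assoc, ← mul_pow, hcs]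
      norm_num
    have hidx : (-(i:ℤ)-1 - j) = -((i:ℤ)+j)-1 := by ring
    rw [hidx, hsign, natCast_zsmul]
end

section
/- Let Λ be a type and let P = ℤ[x_{λ,j} : λ ∈ Λ, j ∈ ℕ] be the polynomial ring over ℤ in variables indexed by Λ × ℕ. There exists a unique ring homomorphism Φ : P → P[[X]] into the formal power series ring over P such that Φ(x_{λ,j}) = ∑_{i≥0} binom(i+j,i) x_{λ,i+j} X^i for all λ ∈ Λ and j ∈ ℕ. Moreover, the additive maps D_i : P → P defined by taking the i-th coefficient of Φ satisfy D_0 = id and the iterativity law D_i ∘ D_j = binom(i+j,i) D_{i+j} for all i,j ≥ 0. -/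
open Finset PowerSeries

private lemma arc_key_sum {R : Type*} [CommRing R] (i j : ℕ) (f g : ℕ → R) :
    ∑ q ∈ Finset.HasAntidiagonal.antidiagonal j, ∑ r ∈ Finset.HasAntidiagonal.antidiagonal i,
      (((r.1 + q.1).choose r.1 * (r.2 + q.2).choose r.2 : ℕ) : R) *
        (f (r.1 + q.1) * g (r.2 + q.2))
      = ((i + j).choose i : ℕ) * ∑ p ∈ Finset.HasAntidiagonal.antidiagonal (i + j), f p.1 * g p.2 := by
  classical
  rw [Finset.mul_sum]
  have hR : ∑ p ∈ Finset.HasAntidiagonal.antidiagonal (i + j), (((i + j).choose i : ℕ) : R) * (f p.1 * g p.2)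
      = ∑ p ∈ Finset.HasAntidiagonal.antidiagonal (i + j), ∑ r ∈ Finset.HasAntidiagonal.antidiagonal i,
          ((p.1.choose r.1 * p.2.choose r.2 : ℕ) : R) * (f p.1 * g p.2) := by
    refine Finset.sum_congr rfl fun p hp => ?_
    have hp' : p.1 + p.2 = i + j := Finset.HasAntidiagonal.mem_antidiagonal.mp hp
    rw [← hp', Nat.add_choose_eq, Nat.cast_sum, Finset.sum_mul]
  rw [hR]
  rw [← Finset.sum_product' (s := Finset.HasAntidiagonal.antidiagonal j) (t := Finset.HasAntidiagonal.antidiagonal i)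
    (f := fun q r => (((r.1 + q.1).choose r.1 * (r.2 + q.2).choose r.2 : ℕ) : R) *
        (f (r.1 + q.1) * g (r.2 + q.2))),
    ← Finset.sum_product' (s := Finset.HasAntidiagonal.antidiagonal (i + j)) (t := Finset.HasAntidiagonal.antidiagonal i)
    (f := fun p r => ((p.1.choose r.1 * p.2.choose r.2 : ℕ) : R) * (f p.1 * g p.2))]
  have hfilt : ∑ x ∈ Finset.HasAntidiagonal.antidiagonal (i + j) ×ˢ Finset.HasAntidiagonal.antidiagonal i,
        ((x.1.1.choose x.2.1 * x.1.2.choose x.2.2 : ℕ) : R) * (f x.1.1 * g x.1.2)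
      = ∑ x ∈ (Finset.HasAntidiagonal.antidiagonal (i + j) ×ˢ Finset.HasAntidiagonal.antidiagonal i).filter
          (fun x => x.2.1 ≤ x.1.1 ∧ x.2.2 ≤ x.1.2),
        ((x.1.1.choose x.2.1 * x.1.2.choose x.2.2 : ℕ) : R) * (f x.1.1 * g x.1.2) := by
    refine (Finset.sum_filter_of_ne fun x _ hne => ?_).symm
    by_contra hc
    apply hne
    rcases not_and_or.mp hc with h | h
    · rw [Nat.choose_eq_zero_of_lt (by omega)]; simp
    · rw [Nat.choose_eq_zero_of_lt (n := x.1.2) (by omega)]; simp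
  rw [hfilt]
  refine Finset.sum_nbij' (i := fun x => ((x.2.1 + x.1.1, x.2.2 + x.1.2), x.2))
    (j := fun y => ((y.1.1 - y.2.1, y.1.2 - y.2.2), y.2)) ?_ ?_ ?_ ?_ ?_
  · intro x hx
    simp only [Finset.mem_product, Finset.HasAntidiagonal.mem_antidiagonal] at hx
    simp only [Finset.mem_filter, Finset.mem_product, Finset.HasAntidiagonal.mem_antidiagonal]
    refine ⟨⟨by omega, by omega⟩, by omega, by omega⟩
  · intro y hy
    simp only [Finset.mem_filter, Finset.mem_product, Finset.HasAntidiagonal.mem_antidiagonal] at hy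
    obtain ⟨⟨h1, h2⟩, h3, h4⟩ := hy
    simp only [Finset.mem_product, Finset.HasAntidiagonal.mem_antidiagonal]
    exact ⟨by omega, by omega⟩
  · intro x hx
    simp only [Nat.add_sub_cancel_left]
  · intro y hy
    simp only [Finset.mem_filter, Finset.mem_product, Finset.HasAntidiagonal.mem_antidiagonal] at hy
    obtain ⟨⟨h1, h2⟩, h3, h4⟩ := hy
    obtain ⟨⟨y11, y12⟩, y21, y22⟩ := y
    simp only at h1 h2 h3 h4
    simp only [Prod.mk.injEq]
    exact ⟨⟨by omega, by omega⟩, by simp⟩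
  · intro x hx
    rfl

private noncomputable def arcSubFun {R : Type*} [CommRing R] (f : PowerSeries R) :
    PowerSeries (PowerSeries R) :=
  PowerSeries.mk fun j => PowerSeries.mk fun i =>
    (((i + j).choose i : ℕ) : R) * PowerSeries.coeff (i + j) f

private lemma arcSubFun_coeff {R : Type*} [CommRing R] (f : PowerSeries R) (i j : ℕ) :
    PowerSeries.coeff i (PowerSeries.coeff j (arcSubFun f))
      = (((i + j).choose i : ℕ) : R) * PowerSeries.coeff (i + j) f := by
  simp only [arcSubFun, PowerSeries.coeff_mk]

/-- Substitution `T ↦ X + Y` as a ring hom `R[[T]] → R[[X]][[Y]]`. -/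
private noncomputable def arcSub (R : Type*) [CommRing R] :
    PowerSeries R →+* PowerSeries (PowerSeries R) where
  toFun := arcSubFun
  map_one' := by
    ext j : 1
    ext i : 1
    rw [arcSubFun_coeff, PowerSeries.coeff_one, PowerSeries.coeff_one]
    by_cases hj : j = 0
    · subst hj
      by_cases hi : i = 0
      · subst hi; simp
      · rw [if_neg (by omega), if_pos rfl, PowerSeries.coeff_one, if_neg hi, mul_zero]
    · rw [if_neg (by omega), if_neg hj, map_zero, mul_zero]
  map_mul' f g := by
    ext j : 1
    ext i : 1
    rw [arcSubFun_coeff, PowerSeries.coeff_mul j (arcSubFun f) (arcSubFun g), map_sum]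
    have hc : ∀ q ∈ Finset.HasAntidiagonal.antidiagonal j,
        (PowerSeries.coeff i)
          (PowerSeries.coeff q.1 (arcSubFun f) *
            PowerSeries.coeff q.2 (arcSubFun g))
        = ∑ r ∈ Finset.HasAntidiagonal.antidiagonal i,
            (((r.1 + q.1).choose r.1 * (r.2 + q.2).choose r.2 : ℕ) : R) *
              (PowerSeries.coeff (r.1 + q.1) f * PowerSeries.coeff (r.2 + q.2) g) := by
      intro q _
      rw [PowerSeries.coeff_mul]
      refine Finset.sum_congr rfl fun r _ => ?_
      simp only [arcSubFun, PowerSeries.coeff_mk]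
      push_cast
      ring
    rw [Finset.sum_congr rfl hc, arc_key_sum i j
      (fun n => PowerSeries.coeff n f) (fun n => PowerSeries.coeff n g),
      PowerSeries.coeff_mul]
  map_zero' := by
    ext j : 1
    ext i : 1
    rw [arcSubFun_coeff]
    simp
  map_add' f g := by
    ext j : 1
    ext i : 1
    simp only [map_add, arcSubFun_coeff]
    ring

private lemma arcSub_coeff {R : Type*} [CommRing R] (f : PowerSeries R) (i j : ℕ) :
    PowerSeries.coeff i (PowerSeries.coeff j (arcSub R f))
      = (((i + j).choose i : ℕ) : R) * PowerSeries.coeff (i + j) f :=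
  arcSubFun_coeff f i j

/-- The arc algebra structure on a polynomial ring.
Let `P = ℤ[x_{λ,j}]` (`λ ∈ Λ`, `j ∈ ℕ`).  There is a unique ring homomorphism
`Φ : P → P[[X]]` with `Φ(x_{λ,j}) = ∑_i binom(i+j,i) x_{λ,i+j} X^i`, and for
any such `Φ` the coefficient maps `D i = coeff i ∘ Φ` satisfy `D 0 = id` and
the iterativity law `D i ∘ D j = binom(i+j,i) D (i+j)`. -/
theorem arc_algebra_of_polynomial_ring
    (Λ : Type*) :
    (∃! Φ : MvPolynomial (Λ × ℕ) ℤ →+* PowerSeries (MvPolynomial (Λ × ℕ) ℤ),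
      ∀ (lam : Λ) (j : ℕ),
        Φ (MvPolynomial.X (lam, j))
          = PowerSeries.mk fun i => ((i + j).choose i) • MvPolynomial.X (lam, i + j)) ∧
    (∀ Φ : MvPolynomial (Λ × ℕ) ℤ →+* PowerSeries (MvPolynomial (Λ × ℕ) ℤ),
      (∀ (lam : Λ) (j : ℕ),
        Φ (MvPolynomial.X (lam, j))
          = PowerSeries.mk fun i => ((i + j).choose i) • MvPolynomial.X (lam, i + j)) →
      (∀ q : MvPolynomial (Λ × ℕ) ℤ, PowerSeries.coeff 0 (Φ q) = q) ∧
      (∀ (i j : ℕ) (q : MvPolynomial (Λ × ℕ) ℤ),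
        PowerSeries.coeff i (Φ (PowerSeries.coeff j (Φ q)))
          = ((i + j).choose i) • PowerSeries.coeff (i + j) (Φ q))) := by
  set P := MvPolynomial (Λ × ℕ) ℤ with hP
  constructor
  · -- existence and uniqueness
    refine ⟨MvPolynomial.eval₂Hom (Int.castRingHom (PowerSeries P))
      (fun p => PowerSeries.mk fun i => ((i + p.2).choose i) • MvPolynomial.X (p.1, i + p.2)),
      fun lam j => ?_, fun Ψ hΨ => ?_⟩
    · exact MvPolynomial.eval₂Hom_X' _ _ _
    · apply MvPolynomial.ringHom_ext
      · intro r
        rw [show (MvPolynomial.C r : P) = (r : P) from eq_intCast (MvPolynomial.C : ℤ →+* P) r]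
        simp only [map_intCast]
      · intro p
        rw [hΨ p.1 p.2, MvPolynomial.eval₂Hom_X']
  · intro Φ hΦ
    constructor
    · -- D 0 = id
      intro q
      have h : (PowerSeries.constantCoeff (R := P)).comp Φ = RingHom.id P := by
        apply MvPolynomial.ringHom_ext
        · intro r
          rw [show (MvPolynomial.C r : P) = (r : P) from eq_intCast (MvPolynomial.C : ℤ →+* P) r]
          simp only [RingHom.comp_apply, map_intCast, RingHom.id_apply]
        · intro p
          rw [RingHom.comp_apply, hΦ p.1 p.2, RingHom.id_apply,
            ← PowerSeries.coeff_zero_eq_constantCoeff_apply, PowerSeries.coeff_mk]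
          simp
      have := congrArg (fun F => F q) h
      rw [PowerSeries.coeff_zero_eq_constantCoeff_apply]; exact this
    · -- iterativity
      intro i j q
      have hEF : (PowerSeries.map Φ).comp Φ = (arcSub P).comp Φ := by
        apply MvPolynomial.ringHom_ext
        · intro r
          rw [show (MvPolynomial.C r : P) = (r : P) from eq_intCast (MvPolynomial.C : ℤ →+* P) r]
          simp only [RingHom.comp_apply, map_intCast]
        · intro p
          obtain ⟨lam, k⟩ := p
          rw [RingHom.comp_apply, RingHom.comp_apply, hΦ lam k]
          ext j' : 1
          ext i' : 1
          rw [PowerSeries.coeff_map, PowerSeries.coeff_mk, map_nsmul, hΦ lam (j' + k),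
            map_nsmul, PowerSeries.coeff_mk]
          have harc : PowerSeries.coeff i' (PowerSeries.coeff j'
              (arcSub P (PowerSeries.mk fun i => ((i + k).choose i) • MvPolynomial.X (lam, i + k))))
              = (((i' + j').choose i' : ℕ) : P) *
                (((i' + j' + k).choose (i' + j')) • MvPolynomial.X (lam, i' + j' + k)) := by
            rw [arcSub_coeff, PowerSeries.coeff_mk]
          rw [harc, smul_smul]
          have hidx : i' + (j' + k) = i' + j' + k := by omega
          rw [hidx]
          have h1 := Nat.choose_mul (n := i' + j' + k) (k := i' + j') (s := i')
            (by omega)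
          have h2 : i' + j' + k - i' = j' + k := by omega
          have h3 : i' + j' - i' = j' := by omega
          rw [h2, h3] at h1
          have hnat : (j' + k).choose j' * ((i' + j' + k).choose i')
              = (i' + j').choose i' * ((i' + j' + k).choose (i' + j')) :=
            calc (j' + k).choose j' * ((i' + j' + k).choose i')
                = (i' + j' + k).choose i' * (j' + k).choose j' := by ring
              _ = (i' + j' + k).choose (i' + j') * (i' + j').choose i' := h1.symm
              _ = (i' + j').choose i' * ((i' + j' + k).choose (i' + j')) := by ring
          rw [hnat, mul_smul]
          exact nsmul_eq_mul _ _
      have := congrArg (fun F => PowerSeries.coeff i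
        (PowerSeries.coeff j (F q))) hEF
      simp only [RingHom.comp_apply] at this
      rw [PowerSeries.coeff_map, arcSub_coeff] at this
      rw [this, nsmul_eq_mul]
end

section
/- Let A be a commutative ring that is a ℚ-algebra. Then there exist a commutative ℚ-algebra A^∞, a derivation δ : A^∞ → A^∞, and a ring homomorphism ι : A → A^∞ with the following universal property: for every commutative ℚ-algebra S equipped with a derivation d : S → S and every ring homomorphism f : A → S, there exists a unique ring homomorphism φ : A^∞ → S satisfying φ ∘ ι = f and φ ∘ δ = d ∘ φ. -/
open MvPolynomial

universe u

namespace ArcAlgebraAux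

variable (A : Type u) [CommRing A] [Algebra ℚ A]

/-- The big polynomial ring on symbols `X (a, n)` for `a : A`, `n : ℕ`. -/
abbrev R : Type u := MvPolynomial (A × ℕ) ℚ

/-- The derivation sending `X (a, n)` to `X (a, n+1)`. -/
noncomputable def D : Derivation ℚ (R A) (R A) :=
  mkDerivation ℚ (fun p : A × ℕ => (X (p.1, p.2 + 1) : R A))

@[simp] lemma D_X (a : A) (n : ℕ) : D A (X (a, n)) = X (a, n + 1) :=
  mkDerivation_X ℚ _ _

/-- The defining relations (at level 0). -/
def rels : Set (R A) :=
  {p | (∃ a b : A, p = X (a + b, 0) - X (a, 0) - X (b, 0)) ∨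
       (∃ a b : A, p = X (a * b, 0) - X (a, 0) * X (b, 0)) ∨
       p = X ((1 : A), 0) - 1}

/-- The differential ideal generated by the relations. -/
noncomputable def I : Ideal (R A) :=
  Ideal.span {q | ∃ r ∈ rels A, ∃ n : ℕ, q = (D A)^[n] r}

lemma rel_mem_I {r : R A} (hr : r ∈ rels A) : r ∈ I A :=
  Ideal.subset_span ⟨r, hr, 0, rfl⟩

lemma D_mem_I {x : R A} (hx : x ∈ I A) : D A x ∈ I A := by
  refine Submodule.span_induction ?_ ?_ ?_ ?_ hx
  · rintro q ⟨r, hr, n, rfl⟩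
    exact Ideal.subset_span ⟨r, hr, n + 1, (Function.iterate_succ_apply' (D A) n r).symm⟩
  · simp
  · intro x y _ _ hx hy
    rw [map_add]; exact Ideal.add_mem _ hx hy
  · intro a x hxmem hx
    rw [smul_eq_mul, Derivation.leibniz, smul_eq_mul, smul_eq_mul]
    exact Ideal.add_mem _ (Ideal.mul_mem_left _ _ hx)
      (Ideal.mul_mem_right _ _ (show x ∈ I A from hxmem))

/-- The arc algebra. -/
noncomputable abbrev B : Type u := R A ⧸ I A

noncomputable def mkB : R A →+* B A := Ideal.Quotient.mk (I A)

/-- The induced derivation on the quotient. -/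
noncomputable def δB : B A → B A := fun b =>
  Quotient.liftOn b (fun x => mkB A (D A x)) (by
    intro x y h
    have hxy : x - y ∈ I A := (Submodule.quotientRel_def (I A)).mp h
    have : D A x - D A y ∈ I A := by
      rw [← map_sub]; exact D_mem_I A hxy
    exact Ideal.Quotient.eq.mpr this)

@[simp] lemma δB_mk (x : R A) : δB A (mkB A x) = mkB A (D A x) := rfl

lemma mkB_surjective : Function.Surjective (mkB A) := Ideal.Quotient.mk_surjective

lemma δB_add (x y : B A) : δB A (x + y) = δB A x + δB A y := by
  obtain ⟨x, rfl⟩ := mkB_surjective A x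
  obtain ⟨y, rfl⟩ := mkB_surjective A y
  rw [← map_add, δB_mk, map_add, map_add, δB_mk, δB_mk]

lemma δB_mul (x y : B A) : δB A (x * y) = δB A x * y + x * δB A y := by
  obtain ⟨x, rfl⟩ := mkB_surjective A x
  obtain ⟨y, rfl⟩ := mkB_surjective A y
  rw [← map_mul, δB_mk, Derivation.leibniz, smul_eq_mul, smul_eq_mul, map_add, map_mul,
    map_mul, δB_mk, δB_mk]
  ring

/-- The structure map `A → B A`. -/
noncomputable def ιhom : A →+* B A where
  toFun a := mkB A (X (a, 0))
  map_one' := by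
    have h : (X ((1 : A), 0) : R A) - 1 ∈ I A := rel_mem_I A (Or.inr (Or.inr rfl))
    exact Ideal.Quotient.eq.mpr h
  map_mul' a b := by
    have h : (X (a * b, 0) : R A) - X (a, 0) * X (b, 0) ∈ I A :=
      rel_mem_I A (Or.inr (Or.inl ⟨a, b, rfl⟩))
    exact Ideal.Quotient.eq.mpr h
  map_zero' := by
    have h : (X ((0 : A) + 0, 0) : R A) - X (0, 0) - X (0, 0) ∈ I A :=
      rel_mem_I A (Or.inl ⟨0, 0, rfl⟩)
    rw [add_zero] at h
    have h2 : (X ((0 : A), 0) : R A) ∈ I A := by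
      have := neg_mem h
      simpa using this
    exact Ideal.Quotient.eq_zero_iff_mem.mpr h2
  map_add' a b := by
    have h : (X (a + b, 0) : R A) - X (a, 0) - X (b, 0) ∈ I A :=
      rel_mem_I A (Or.inl ⟨a, b, rfl⟩)
    have h' : (X (a + b, 0) : R A) - (X (a, 0) + X (b, 0)) ∈ I A := by
      have : (X (a + b, 0) : R A) - (X (a, 0) + X (b, 0))
          = X (a + b, 0) - X (a, 0) - X (b, 0) := by ring
      rw [this]; exact h
    exact Ideal.Quotient.eq.mpr h'

section Universal

variable {S : Type u} [CommRing S] [Algebra ℚ S] {d : S → S}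
  (hadd : ∀ x y : S, d (x + y) = d x + d y)
  (hmul : ∀ x y : S, d (x * y) = d x * y + x * d y)

include hadd in
lemma d_zero : d 0 = 0 := by
  have := hadd 0 0
  rw [add_zero] at this
  exact (left_eq_add.mp this)

include hadd hmul in
lemma d_one : d 1 = 0 := by
  have := hmul 1 1
  rw [mul_one, one_mul, mul_one] at this
  exact (left_eq_add.mp this)

include hadd hmul in
lemma d_natCast (n : ℕ) : d (n : S) = 0 := by
  induction n with
  | zero => simpa using d_zero hadd
  | succ k ih =>
    push_cast
    rw [hadd, ih, d_one hadd hmul, add_zero]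

include hadd in
lemma d_neg (x : S) : d (-x) = -d x := by
  have h := hadd x (-x)
  rw [add_neg_cancel, d_zero hadd] at h
  exact eq_neg_of_add_eq_zero_right h.symm

include hadd hmul in
lemma d_intCast (m : ℤ) : d (m : S) = 0 := by
  induction m using Int.induction_on with
  | zero => simpa using d_zero hadd
  | succ k ih => push_cast at ih ⊢; rw [hadd, ih, d_one hadd hmul, add_zero]
  | pred k ih =>
    push_cast at ih ⊢
    rw [sub_eq_add_neg, hadd, ih, zero_add, d_neg hadd, d_one hadd hmul, neg_zero]

include hadd hmul in
lemma d_algebraMap (q : ℚ) : d (algebraMap ℚ S q) = 0 := by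
  have hden : (q.den : ℚ) ≠ 0 := by exact_mod_cast q.den_ne_zero
  have hq : q * (q.den : ℚ) = (q.num : ℚ) := (eq_div_iff hden).mp (Rat.num_div_den q).symm
  have h1 : algebraMap ℚ S q * (q.den : S) = ((q.num : ℤ) : S) := by
    have := congrArg (algebraMap ℚ S) hq
    rw [map_mul] at this
    simpa using this
  have h2 : d (algebraMap ℚ S q * (q.den : S)) = (q.den : S) * d (algebraMap ℚ S q) := by
    rw [hmul, d_natCast hadd hmul, mul_zero, add_zero, mul_comm]
  have h3 : (q.den : S) * d (algebraMap ℚ S q) = 0 := by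
    rw [← h2, h1, d_intCast hadd hmul]
  have h4 : algebraMap ℚ S ((q.den : ℚ)⁻¹) * ((q.den : S) * d (algebraMap ℚ S q)) = 0 := by
    rw [h3, mul_zero]
  have h5 : algebraMap ℚ S ((q.den : ℚ)⁻¹) * (q.den : S) = 1 := by
    have : ((q.den : S)) = algebraMap ℚ S (q.den : ℚ) := by simp
    rw [this, ← map_mul, inv_mul_cancel₀ hden, map_one]
  rw [← mul_assoc, h5, one_mul] at h4
  exact h4

include hadd in
lemma d_iter_zero (n : ℕ) : d^[n] (0 : S) = 0 := by
  induction n with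
  | zero => rfl
  | succ k ih => rw [Function.iterate_succ_apply', ih, d_zero hadd]

variable (f : A →+* S)

/-- The evaluation map. -/
noncomputable def ψ : R A →ₐ[ℚ] S :=
  aeval (fun p : A × ℕ => d^[p.2] (f p.1))

@[simp] lemma ψ_X (a : A) (n : ℕ) : ψ A (d := d) f (X (a, n)) = d^[n] (f a) :=
  aeval_X _ _

include hadd hmul in
lemma ψ_D (p : R A) : ψ A (d := d) f (D A p) = d (ψ A (d := d) f p) := by
  induction p using MvPolynomial.induction_on with
  | C q =>
    rw [show (C q : R A) = algebraMap ℚ (R A) q from rfl, Derivation.map_algebraMap, map_zero]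
    rw [show (ψ A (d := d) f) (algebraMap ℚ (R A) q) = algebraMap ℚ S q from
      (ψ A (d := d) f).commutes q]
    rw [d_algebraMap hadd hmul]
  | add p q hp hq =>
    rw [map_add, map_add, map_add, hp, hq, hadd]
  | mul_X p i hp =>
    rw [Derivation.leibniz, smul_eq_mul, smul_eq_mul, map_add, map_mul, map_mul, map_mul,
      hmul, hp]
    obtain ⟨a, n⟩ := i
    rw [D_X, ψ_X, ψ_X, Function.iterate_succ_apply']
    ring

include hadd hmul in
lemma ψ_rels {r : R A} (hr : r ∈ rels A) : ψ A (d := d) f r = 0 := by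
  rcases hr with ⟨a, b, rfl⟩ | ⟨a, b, rfl⟩ | rfl
  · simp only [map_sub, ψ_X, Function.iterate_zero, id_eq, map_add]
    ring
  · simp only [map_sub, map_mul, ψ_X, Function.iterate_zero, id_eq, map_mul]
    ring
  · simp only [map_sub, ψ_X, Function.iterate_zero, id_eq, map_one]
    ring

include hadd hmul in
lemma ψ_I {x : R A} (hx : x ∈ I A) : ψ A (d := d) f x = 0 := by
  refine Submodule.span_induction ?_ ?_ ?_ ?_ hx
  · rintro q ⟨r, hr, n, rfl⟩
    have key : ∀ m : ℕ, ψ A (d := d) f ((D A)^[m] r) = d^[m] (ψ A (d := d) f r) := by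
      intro m
      induction m with
      | zero => rfl
      | succ k ih =>
        rw [Function.iterate_succ_apply', Function.iterate_succ_apply',
          ψ_D A hadd hmul, ih]
    rw [key, ψ_rels A hadd hmul f hr, d_iter_zero hadd]
  · simp
  · intro x y _ _ hx hy
    rw [map_add, hx, hy, add_zero]
  · intro a x _ hx
    rw [smul_eq_mul, map_mul, hx, mul_zero]

end Universal

end ArcAlgebraAux

/-- Existence of the arc algebra `A^∞` of a commutative
ℚ-algebra `A`: a commutative ℚ-algebra with a derivation and a ring map
`ι : A → A^∞`, universal among ring maps from `A` to commutative ℚ-algebras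
equipped with a derivation. -/
theorem arc_algebra_left_adjoint_char_zero
    (A : Type u) [CommRing A] [Algebra ℚ A] :
    ∃ (B : Type u) (_ : CommRing B) (_ : Algebra ℚ B) (δ : B → B)
      (ι : A →+* B),
      (∀ x y : B, δ (x + y) = δ x + δ y) ∧
      (∀ x y : B, δ (x * y) = δ x * y + x * δ y) ∧
      (∀ (S : Type u) (_ : CommRing S) (_ : Algebra ℚ S) (d : S → S),
        (∀ x y : S, d (x + y) = d x + d y) →
        (∀ x y : S, d (x * y) = d x * y + x * d y) →
        ∀ f : A →+* S,
          ∃! φ : B →+* S, φ.comp ι = f ∧ ∀ b : B, φ (δ b) = d (φ b)) := by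
  classical
  open ArcAlgebraAux in
  refine ⟨B A, inferInstance, inferInstance, δB A, ιhom A, δB_add A, δB_mul A, ?_⟩
  intro S _ _ d hadd hmul f
  let φ0 : B A →+* S := Ideal.Quotient.lift (I A) (ψ A (d := d) f).toRingHom
    (fun x hx => ψ_I A hadd hmul f hx)
  have φ0_mk : ∀ x : R A, φ0 (mkB A x) = ψ A (d := d) f x := fun x =>
    Ideal.Quotient.lift_mk _ _ _
  refine ⟨φ0, ⟨?_, ?_⟩, ?_⟩
  · refine RingHom.ext fun a => ?_
    show φ0 (mkB A (X (a, 0))) = f a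
    rw [φ0_mk]
    simpa using ψ_X (d := d) A f a 0
  · intro b
    obtain ⟨x, rfl⟩ := mkB_surjective A b
    show φ0 (mkB A (D A x)) = d (φ0 (mkB A x))
    rw [φ0_mk, φ0_mk, ψ_D A hadd hmul f x]
  · -- uniqueness
    intro φ' ⟨hcomp, hder⟩
    have hX : ∀ (a : A) (n : ℕ), φ' (mkB A (X (a, n))) = d^[n] (f a) := by
      intro a n
      induction n with
      | zero =>
        show φ' (ιhom A a) = f a
        rw [← hcomp]; rfl
      | succ k ih =>
        have : mkB A (X (a, k + 1)) = δB A (mkB A (X (a, k))) := by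
          rw [δB_mk, D_X]
        rw [this, hder, ih, Function.iterate_succ_apply']
    have hcomp' : φ'.comp (mkB A) = φ0.comp (mkB A) := by
      apply MvPolynomial.ringHom_ext
      · intro q
        have h := Subsingleton.elim
          ((φ'.comp (mkB A)).comp (MvPolynomial.C : ℚ →+* R A))
          ((φ0.comp (mkB A)).comp (MvPolynomial.C : ℚ →+* R A))
        exact RingHom.congr_fun h q
      · rintro ⟨a, n⟩
        show φ' (mkB A (X (a, n))) = φ0 (mkB A (X (a, n)))
        rw [hX a n, φ0_mk]
        exact (ψ_X (d := d) A f a n).symm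
    refine RingHom.ext fun b => ?_
    obtain ⟨x, rfl⟩ := mkB_surjective A b
    exact RingHom.congr_fun hcomp' x
end

section
/- Let A be a commutative ring and B a commutative A-algebra that is formally étale. Then for every derivation d : A → A there exists a unique derivation D : B → B such that D(algebraMap A B a) = algebraMap A B (d a) for all a ∈ A. -/
open TrivSqZeroExt in
/-- Every derivation of a commutative ring `A` extends uniquely
along a formally étale algebra `A → B`. -/
theorem derivation_extends_uniquely_along_formally_etale
    {A B : Type u} [CommRing A] [CommRing B] [Algebra A B]
    [Algebra.FormallyEtale A B] (d : A → A)
    (hdadd : ∀ a b : A, d (a + b) = d a + d b)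
    (hdmul : ∀ a b : A, d (a * b) = d a * b + a * d b) :
    ∃! D : B → B,
      (∀ x y : B, D (x + y) = D x + D y) ∧
      (∀ x y : B, D (x * y) = D x * y + x * D y) ∧
      (∀ a : A, D (algebraMap A B a) = algebraMap A B (d a)) := by
  classical
  have hd1 : d 1 = 0 := by
    have h := hdmul 1 1; simp only [mul_one, one_mul] at h; exact left_eq_add.mp h
  have mulsnd : ∀ x y : TrivSqZeroExt B B,
      (x * y).snd = x.fst * y.snd + y.fst * x.snd := by
    intro x y
    rw [snd_mul, smul_eq_mul, op_smul_eq_smul, smul_eq_mul]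
  -- ring hom from a derivation-like map
  have mkHom : ∀ (R : Type u) (_ : CommRing R) (f : R →+* B) (D : R → B),
      (∀ x y : R, D (x + y) = D x + D y) →
      (∀ x y : R, D (x * y) = D x * f y + f x * D y) → D 1 = 0 →
      ∃ φ : R →+* TrivSqZeroExt B B, (∀ r, (φ r).fst = f r) ∧ (∀ r, (φ r).snd = D r) := by
    intro R _ f D hDa hDm hD1
    refine ⟨{ toFun := fun r => inl (f r) + inr (D r), map_one' := ?_, map_mul' := ?_,
              map_zero' := ?_, map_add' := ?_ },
        fun r => by
          show (inl (f r) + inr (D r) : TrivSqZeroExt B B).fst = f r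
          simp only [fst_add, fst_inl, fst_inr, add_zero],
        fun r => by
          show (inl (f r) + inr (D r) : TrivSqZeroExt B B).snd = D r
          simp only [snd_add, snd_inl, snd_inr, zero_add]⟩
    · apply TrivSqZeroExt.ext
      · simp only [fst_add, fst_inl, fst_inr, add_zero, map_one, fst_one]
      · simp only [snd_add, snd_inl, snd_inr, zero_add, hD1, map_one, snd_one]
    · intro x y
      apply TrivSqZeroExt.ext
      · simp only [fst_add, fst_inl, fst_inr, add_zero, fst_mul, map_mul]
      · simp only [snd_add, snd_inl, snd_inr, zero_add, mulsnd, hDm, fst_add, fst_inl,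
          fst_inr, add_zero, map_mul]
        ring
    · have h0 : D 0 = 0 := by
        have h := hDa 0 0; simp only [add_zero] at h; exact left_eq_add.mp h
      apply TrivSqZeroExt.ext
      · simp only [fst_add, fst_inl, fst_inr, add_zero, map_zero, fst_zero]
      · simp only [snd_add, snd_inl, snd_inr, zero_add, h0, map_zero, snd_zero]
    · intro x y
      apply TrivSqZeroExt.ext
      · simp only [fst_add, fst_inl, fst_inr, add_zero, map_add]
      · simp only [snd_add, snd_inl, snd_inr, zero_add, hDa, fst_add]
  -- the twisted algebra structure
  obtain ⟨φ, hφ1, hφ2⟩ := mkHom A ‹_› (algebraMap A B)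
      (fun a => algebraMap A B (d a))
      (fun a b => by rw [hdadd, map_add])
      (fun a b => by rw [hdmul, map_add, map_mul, map_mul])
      (by rw [hd1, map_zero])
  letI alg : Algebra A (TrivSqZeroExt B B) := φ.toAlgebra
  have halgMap : ∀ a : A, algebraMap A (TrivSqZeroExt B B) a = φ a := fun _ => rfl
  -- the projection as an A-algebra hom
  let g : TrivSqZeroExt B B →ₐ[A] B :=
    { (TrivSqZeroExt.fstHom B B B).toRingHom with
      commutes' := fun a => by
        simpa [halgMap] using hφ1 a }
  have hg : ∀ x : TrivSqZeroExt B B, g x = x.fst := fun _ => rfl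
  have hgsurj : Function.Surjective g := fun b => ⟨inl b, by simp [hg]⟩
  have hgnil : IsNilpotent (RingHom.ker (g : TrivSqZeroExt B B →+* B)) := by
    refine ⟨2, ?_⟩
    rw [Ideal.zero_eq_bot, ← le_bot_iff]
    have h2 : (RingHom.ker (g : TrivSqZeroExt B B →+* B)) ^ 2
        = RingHom.ker (g : TrivSqZeroExt B B →+* B) * RingHom.ker (g : TrivSqZeroExt B B →+* B) :=
      sq _
    rw [h2, Ideal.mul_le]
    intro r hr s hs
    have hr' : r.fst = 0 := hr
    have hs' : s.fst = 0 := hs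
    have hrs : r * s = 0 := by
      apply TrivSqZeroExt.ext
      · rw [fst_mul, hr', zero_mul, fst_zero]
      · rw [mulsnd, hr', hs', zero_mul, zero_mul, add_zero, snd_zero]
    exact Ideal.mem_bot.mpr hrs
  -- lift the identity using formal smoothness
  let ℓ : B →ₐ[A] TrivSqZeroExt B B :=
    Algebra.FormallySmooth.liftOfSurjective (AlgHom.id A B) g hgsurj hgnil
  have hℓ : ∀ b : B, (ℓ b).fst = b := by
    intro b
    have := Algebra.FormallySmooth.liftOfSurjective_apply (AlgHom.id A B) g hgsurj hgnil b
    rwa [hg] at this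
  refine ⟨fun b => (ℓ b).snd, ⟨?_, ?_, ?_⟩, ?_⟩
  · intro x y; dsimp only; rw [map_add, snd_add]
  · intro x y; dsimp only; rw [map_mul, mulsnd, hℓ, hℓ]; ring
  · intro a
    have h := ℓ.commutes a
    rw [halgMap] at h
    dsimp only
    rw [h, hφ2]
  · -- uniqueness
    intro D' ⟨hDa', hDm', hDalg'⟩
    obtain ⟨ψ, hψ1, hψ2⟩ := mkHom B ‹_› (RingHom.id B) D' hDa'
      (fun x y => by simpa using hDm' x y)
      (by have h := hDm' 1 1; simp only [mul_one, one_mul] at h; exact left_eq_add.mp h)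
    let ψa : B →ₐ[A] TrivSqZeroExt B B :=
      { ψ with
        commutes' := fun a => by
          show ψ (algebraMap A B a) = algebraMap A (TrivSqZeroExt B B) a
          rw [halgMap]
          apply TrivSqZeroExt.ext
          · rw [hψ1, hφ1]; rfl
          · rw [hψ2, hφ2, hDalg'] }
    have : ψa = ℓ := by
      refine Algebra.FormallyUnramified.ext' (g : TrivSqZeroExt B B →+* B) hgnil _ _ ?_
      intro x
      show g (ψa x) = g (ℓ x)
      rw [hg, hg, hℓ]
      show (ψ x).fst = x
      rw [hψ1]; rfl
    funext b
    have hb : ψa b = ℓ b := by rw [this]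
    calc D' b = (ψ b).snd := (hψ2 b).symm
    _ = (ℓ b).snd := by rw [show ψ b = ℓ b from hb]
end

section
/- Let k be a field of characteristic 0, let D be the unique k-linear derivation of the Laurent polynomial ring k[t^{±1}] with D(t) = 1, and let φ be a k-algebra automorphism of k[t^{±1}] that commutes with D, i.e. φ(D(p)) = D(φ(p)) for all p. Then φ is the identity. -/
open LaurentPolynomial

section Aux

variable {k : Type*} [Field k] [CharZero k]
  (D : Derivation k (LaurentPolynomial k) (LaurentPolynomial k))
  (hD : D (T 1) = 1)

private lemma aux_D_C (a : k) : D (C a) = 0 := by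
  rw [C_eq_algebraMap]; exact Derivation.map_algebraMap D a

include hD in
private lemma aux_D_T (n : ℤ) : D (T n : LaurentPolynomial k) = n • T (n - 1) := by
  have hinv : (T 1 : LaurentPolynomial k) * T (-1) = 1 := by
    rw [← T_add]; norm_num
  have hDm1 : D (T (-1) : LaurentPolynomial k) = -(T (-2)) := by
    have h0 : D ((T 1 : LaurentPolynomial k) * T (-1)) = 0 := by
      rw [hinv]; simp
    rw [Derivation.leibniz, hD, smul_eq_mul, smul_eq_mul, mul_one] at h0
    have := congrArg (fun x => (T (-1) : LaurentPolynomial k) * x) h0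
    simp only [mul_add, ← mul_assoc, mul_comm (T (-1) : LaurentPolynomial k) (T 1), hinv,
      one_mul, mul_zero] at this
    have h2 : (T (-1) : LaurentPolynomial k) * T (-1) = T (-2) := by
      rw [← T_add]; norm_num
    rw [h2] at this
    exact eq_neg_of_add_eq_zero_left this
  induction n using Int.induction_on with
  | zero => simp
  | succ n ih =>
      have : (T ((n : ℤ) + 1) : LaurentPolynomial k) = T n * T 1 := by rw [← T_add]
      rw [this, Derivation.leibniz, hD, ih, smul_eq_mul, smul_eq_mul, mul_one,
        add_smul, one_smul]
      have hTn : (T 1 : LaurentPolynomial k) * ((n : ℤ) • T ((n : ℤ) - 1)) = (n : ℤ) • T n := by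
        rw [mul_smul_comm, ← T_add]; ring_nf
      rw [hTn]
      have : ((n : ℤ) + 1 - 1) = (n : ℤ) := by ring
      rw [this]
      ring
  | pred n ih =>
      have : (T (-(n : ℤ) - 1) : LaurentPolynomial k) = T (-n) * T (-1) := by
        rw [← T_add]; ring_nf
      rw [this, Derivation.leibniz, hDm1, ih, smul_eq_mul, smul_eq_mul]
      have h1 : (T (-(n : ℤ)) : LaurentPolynomial k) * -T (-2) = -T (-(n : ℤ) - 2) := by
        rw [mul_neg, ← T_add]; ring_nf
      have h2 : (T (-1) : LaurentPolynomial k) * ((-(n : ℤ)) • T (-(n : ℤ) - 1))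
          = (-(n : ℤ)) • T (-(n : ℤ) - 2) := by
        rw [mul_smul_comm, ← T_add]; ring_nf
      rw [h1, h2]
      have : (-(n : ℤ) - 1 - 1) = (-(n : ℤ) - 2) := by ring
      rw [this]
      module

include hD in
private lemma aux_coeff (p : LaurentPolynomial k) (m : ℤ) :
    (D p).coeff m = (m + 1) • p.coeff (m + 1) := by
  induction p using LaurentPolynomial.induction_on' with
  | add p q hp hq =>
      rw [map_add]
      show (D p + D q).coeff m = _
      rw [AddMonoidAlgebra.coeff_add, Finsupp.add_apply, AddMonoidAlgebra.coeff_add, Finsupp.add_apply, hp, hq, smul_add]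
  | C_mul_T n a =>
      have : D (C a * T n) = n • (C a * T (n - 1)) := by
        rw [Derivation.leibniz, aux_D_C, smul_zero, add_zero, smul_eq_mul,
          aux_D_T D hD, mul_smul_comm]
      rw [this, ← single_eq_C_mul_T, ← single_eq_C_mul_T]
      show (n • (AddMonoidAlgebra.single (n - 1) a)).coeff m = (m + 1) • (AddMonoidAlgebra.single n a).coeff (m + 1)
      rw [AddMonoidAlgebra.coeff_smul, AddMonoidAlgebra.coeff_single, AddMonoidAlgebra.coeff_single, Finsupp.smul_apply, Finsupp.single_apply, Finsupp.single_apply]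
      by_cases h : n = m + 1
      · subst h; simp
      · rw [if_neg (by omega), if_neg h, smul_zero, smul_zero]

end Aux

/-- Over a field `k` of characteristic 0, any `k`-algebra
automorphism of `k[t^{±1}]` commuting with the derivation `d/dt` (the unique
`k`-linear derivation with `D t = 1`) is the identity. -/
theorem automorphism_commuting_with_ddt_is_id
    (k : Type*) [Field k] [CharZero k]
    (D : Derivation k (LaurentPolynomial k) (LaurentPolynomial k))
    (hD : D (T 1) = 1)
    (φ : LaurentPolynomial k ≃ₐ[k] LaurentPolynomial k)
    (hφ : ∀ p : LaurentPolynomial k, φ (D p) = D (φ p)) :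
    ∀ p : LaurentPolynomial k, φ p = p := by
  -- Let p = φ(T 1); then D p = 1.
  have hu : IsUnit (φ (T 1)) := (isUnit_T 1).map φ
  have hDp : D (φ (T 1)) = 1 := by
    rw [← hφ, hD, map_one]
  -- coefficients of p
  have hc : ∀ m : ℤ, (m + 1) • (φ (T 1)).coeff (m + 1) = (1 : LaurentPolynomial k).coeff m := by
    intro m
    rw [← aux_coeff D hD, hDp]
  have hone : ∀ m : ℤ, (1 : LaurentPolynomial k).coeff m = if m = 0 then (1 : k) else 0 := by
    intro m
    show (AddMonoidAlgebra.single (0 : ℤ) (1 : k)).coeff m = _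
    rw [AddMonoidAlgebra.coeff_single, Finsupp.single_apply]
    simp [eq_comm]
  have hp1 : (φ (T 1)).coeff 1 = 1 := by
    have := hc 0
    rw [hone] at this
    simpa using this
  have hpn : ∀ n : ℤ, n ≠ 0 → n ≠ 1 → (φ (T 1)).coeff n = 0 := by
    intro n hn0 hn1
    have := hc (n - 1)
    rw [hone, if_neg (by omega)] at this
    have h' : (n : ℤ) • (φ (T 1)).coeff n = 0 := by
      rwa [show n - 1 + 1 = n by ring] at this
    rcases smul_eq_zero.mp h' with h | h
    · exact absurd h hn0
    · exact h
  set c : k := (φ (T 1)).coeff 0 with hcdef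
  have hpform : φ (T 1) = C c + T 1 := by
    have h1 : (C c : LaurentPolynomial k) = AddMonoidAlgebra.single 0 c := by
      rw [single_eq_C_mul_T c 0, T_zero, mul_one]
    have h2 : (T 1 : LaurentPolynomial k) = AddMonoidAlgebra.single 1 (1 : k) := by
      rw [single_eq_C_mul_T (1 : k) 1, map_one, one_mul]
    ext a
    conv_rhs => rw [h1, h2]
    rw [AddMonoidAlgebra.coeff_add, Finsupp.add_apply, AddMonoidAlgebra.coeff_single, AddMonoidAlgebra.coeff_single, Finsupp.single_apply, Finsupp.single_apply]
    by_cases ha0 : a = 0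
    · subst ha0; simp [hcdef]
    · by_cases ha1 : a = 1
      · subst ha1; simp [hp1]
      · rw [if_neg (by omega), if_neg (by omega), add_zero, hpn a ha0 ha1]
  -- c = 0
  have hc0 : c = 0 := by
    obtain ⟨u, hu⟩ := hu
    have hpq : φ (T 1) * (↑u⁻¹ : LaurentPolynomial k) = 1 := by
      rw [← hu]; exact u.mul_inv
    obtain ⟨n, f, hf⟩ := exists_T_pow (↑u⁻¹ : LaurentPolynomial k)
    have key : ((Polynomial.X + Polynomial.C c) * f : Polynomial k)
        = Polynomial.X ^ n := by
      apply Polynomial.toLaurent_injective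
      rw [map_mul, map_pow, Polynomial.toLaurent_X, map_add, Polynomial.toLaurent_X,
        Polynomial.toLaurent_C, hf, ← mul_assoc]
      rw [show (T 1 + C c : LaurentPolynomial k) = φ (T 1) by rw [hpform]; ring]
      rw [hpq, one_mul, T_pow, mul_one]
    have := congrArg (Polynomial.eval (-c)) key
    simp only [Polynomial.eval_mul, Polynomial.eval_add, Polynomial.eval_X,
      Polynomial.eval_C, Polynomial.eval_pow, neg_add_cancel, zero_mul] at this
    obtain ⟨h, -⟩ := pow_eq_zero_iff'.mp this.symm
    exact neg_eq_zero.mp h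
  have hpT1 : φ (T 1) = T 1 := by rw [hpform, hc0, map_zero, zero_add]
  -- φ fixes T (-1)
  have hpTm1 : φ (T (-1)) = T (-1) := by
    have h1 : φ (T (-1)) * T 1 = 1 := by
      rw [← hpT1, ← map_mul, ← T_add]
      norm_num
    have h2 : (T (-1) : LaurentPolynomial k) * T 1 = 1 := by
      rw [← T_add]; norm_num
    exact (isUnit_T 1).mul_right_cancel (by rw [h1, h2])
  -- φ fixes all T n
  have hT : ∀ n : ℤ, φ (T n) = T n := by
    intro n
    induction n using Int.induction_on with
    | zero => rw [T_zero, map_one]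
    | succ m ih => rw [T_add, map_mul, ih, hpT1]
    | pred m ih =>
        rw [show (-(m : ℤ) - 1) = (-(m : ℤ)) + (-1) by ring, T_add, map_mul, ih, hpTm1]
  intro p
  induction p using LaurentPolynomial.induction_on' with
  | add p q hp hq => rw [map_add, hp, hq]
  | C_mul_T n a =>
      rw [map_mul, hT, C_eq_algebraMap, AlgEquiv.commutes]
end

section
/- Let k be a field, m a positive integer, ζ ∈ k a primitive m-th root of unity, V a k-vector space, and g : V → V a k-linear automorphism with g^m = id. Let γ be the k-algebra automorphism of the Laurent polynomial ring k[u^{±1}] determined by γ(u) = ζ·u, and let g ⊗ γ be the induced k-linear automorphism of V ⊗_k k[u^{±1}]. Then the subspace of fixed points of g ⊗ γ in V ⊗_k k[u^{±1}] equals the k-linear span of the elementary tensors { x ⊗ u^n : n ∈ ℤ, x ∈ V, g(x) = ζ^{−n}·x }. -/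
open LaurentPolynomial TensorProduct

private lemma gamma_T_aux (k : Type*) [Field k] (ζ : k) (hζ : ζ ≠ 0)
    (γ : LaurentPolynomial k ≃ₐ[k] LaurentPolynomial k)
    (hγ : γ (T 1) = ζ • T 1) (n : ℤ) : γ (T n) = ζ ^ n • T n := by
  have hneg : γ (T (-1)) = ζ⁻¹ • T (-1) := by
    have h1 : γ (T (-1)) * γ (T 1) = 1 := by
      rw [← map_mul, ← T_add]; simp
    have h2 : (ζ⁻¹ • (T (-1) : LaurentPolynomial k)) * γ (T 1) = 1 := by
      rw [hγ, smul_mul_smul_comm, ← T_add, inv_mul_cancel₀ hζ]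
      simp
    have hu : IsUnit (γ (T 1)) := (isUnit_T 1).map γ
    exact hu.mul_right_cancel (h1.trans h2.symm)
  induction n using Int.induction_on with
  | zero => simp
  | succ n ih =>
      have : ((n : ℤ) + 1) = (n + 1 : ℤ) := rfl
      rw [T_add, map_mul, ih, hγ, smul_mul_smul_comm, ← T_add, zpow_add₀ hζ, zpow_one]
  | pred n ih =>
      have : (-(n : ℤ) - 1) = (-n) + (-1) := by ring
      rw [this, T_add, map_mul, ih, hneg, smul_mul_smul_comm, ← T_add]
      rw [show (-(n:ℤ)) + (-1) = -(n:ℤ) - 1 by ring, zpow_sub₀ hζ, zpow_one,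
        div_eq_mul_inv]

/-- For a finite order automorphism `g` of a `k`-vector space
`V` (with `g^m = 1`, `ζ` a primitive `m`-th root of unity) and the
automorphism `γ : u ↦ ζ u` of `k[u^{±1}]`, the fixed points of `g ⊗ γ` on
`V ⊗_k k[u^{±1}]` are the span of the elementary tensors `x ⊗ uⁿ` with
`g x = ζ^{-n} x`. -/
theorem fixed_points_of_twisted_loop_operator
    (k : Type*) [Field k] (m : ℕ) (hm : 0 < m) (ζ : k)
    (hζ₁ : ζ ^ m = 1) (hζ₂ : ∀ d : ℕ, 0 < d → d < m → ζ ^ d ≠ 1)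
    (V : Type*) [AddCommGroup V] [Module k V]
    (g : V →ₗ[k] V) (hg : g ^ m = 1)
    (γ : LaurentPolynomial k ≃ₐ[k] LaurentPolynomial k)
    (hγ : γ (T 1) = ζ • T 1) :
    {w : V ⊗[k] LaurentPolynomial k |
        TensorProduct.map g γ.toLinearMap w = w}
      = (Submodule.span k
          {z : V ⊗[k] LaurentPolynomial k |
            ∃ (n : ℤ) (x : V), g x = ζ ^ (-n) • x ∧ z = x ⊗ₜ[k] T n} :
          Submodule k (V ⊗[k] LaurentPolynomial k)) := by
  have hζ0 : ζ ≠ 0 := by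
    intro h; rw [h, zero_pow hm.ne'] at hζ₁; exact zero_ne_one hζ₁
  have hγT : ∀ n : ℤ, γ (T n) = ζ ^ n • T n := gamma_T_aux k ζ hζ0 γ hγ
  -- the equivalence V ⊗ (ℤ →₀ k) ≃ (ℤ →₀ V)
  let e : (V ⊗[k] LaurentPolynomial k) ≃ₗ[k] (ℤ →₀ V) :=
    (LinearEquiv.lTensor V (AddMonoidAlgebra.coeffLinearEquiv k)).trans
      (TensorProduct.finsuppScalarRight k k V ℤ)
  have he_tmul : ∀ (x : V) (p : LaurentPolynomial k) (n : ℤ),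
      e (x ⊗ₜ[k] p) n = p.coeff n • x :=
    fun x p n => TensorProduct.finsuppScalarRight_apply_tmul_apply x p.coeff n
  have he_symm : ∀ (n : ℤ) (x : V),
      e.symm (Finsupp.single n x) = x ⊗ₜ[k] T n := by
    intro n x
    simp only [e, LinearEquiv.trans_symm, LinearEquiv.trans_apply,
      TensorProduct.finsuppScalarRight_symm_apply_single, LinearEquiv.lTensor_symm_tmul]
    rfl
  have hγcoeff : ∀ (p : LaurentPolynomial k) (n : ℤ),
      (γ p).coeff n = ζ ^ n * p.coeff n := by
    intro p n
    induction p using LaurentPolynomial.induction_on' with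
    | add p q hp hq =>
        rw [map_add, AddMonoidAlgebra.coeff_add, AddMonoidAlgebra.coeff_add, Finsupp.add_apply,
          Finsupp.add_apply, hp, hq, mul_add]
    | C_mul_T j c =>
        have hC : γ (C c) = C c := by
          rw [C_eq_algebraMap]; exact γ.commutes c
        rw [map_mul, hC, hγT j, mul_smul_comm, ← single_eq_C_mul_T]
        simp only [AddMonoidAlgebra.coeff_smul, AddMonoidAlgebra.coeff_single, Finsupp.smul_apply,
          smul_eq_mul]
        by_cases h : j = n
        · subst h; simp
        · simp [h]
  have key : ∀ (w : V ⊗[k] LaurentPolynomial k) (n : ℤ),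
      e (TensorProduct.map g γ.toLinearMap w) n = ζ ^ n • g (e w n) := by
    intro w n
    induction w using TensorProduct.induction_on with
    | zero => simp
    | tmul x p =>
        simp only [TensorProduct.map_tmul, AlgEquiv.toLinearMap_apply,
          he_tmul, map_smul]
        rw [hγcoeff p n, mul_smul]
    | add a b ha hb => simp [map_add, Finsupp.add_apply, ha, hb, smul_add]
  ext w
  simp only [Set.mem_setOf_eq, SetLike.mem_coe]
  constructor
  · intro hw
    have hcomp : ∀ n : ℤ, ζ ^ n • g (e w n) = e w n := by
      intro n; rw [← key w n, hw]
    have hw' : w = (e w).sum (fun n v => v ⊗ₜ[k] T n) := by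
      conv_lhs => rw [← e.symm_apply_apply w, ← Finsupp.sum_single (e w)]
      rw [map_finsuppSum]
      exact Finsupp.sum_congr fun n _ => he_symm n _
    rw [hw', Finsupp.sum]
    refine Submodule.sum_mem _ fun n _ => Submodule.subset_span ?_
    refine ⟨n, e w n, ?_, rfl⟩
    have := hcomp n
    calc g (e w n) = ζ ^ (-n) • (ζ ^ n • g (e w n)) := by
          rw [smul_smul, zpow_neg, inv_mul_cancel₀ (zpow_ne_zero n hζ0), one_smul]
      _ = ζ ^ (-n) • e w n := by rw [this]
  · intro hw
    have : (Submodule.span k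
        {z : V ⊗[k] LaurentPolynomial k |
          ∃ (n : ℤ) (x : V), g x = ζ ^ (-n) • x ∧ z = x ⊗ₜ[k] T n})
        ≤ LinearMap.ker (TensorProduct.map g γ.toLinearMap - LinearMap.id) := by
      rw [Submodule.span_le]
      rintro z ⟨n, x, hx, rfl⟩
      simp only [SetLike.mem_coe, LinearMap.mem_ker, LinearMap.sub_apply,
        LinearMap.id_apply, sub_eq_zero, TensorProduct.map_tmul,
        AlgEquiv.toLinearMap_apply, hx, hγT n]
      rw [TensorProduct.smul_tmul, smul_smul, zpow_neg,
        inv_mul_cancel₀ (zpow_ne_zero n hζ0), one_smul]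
    have h := this hw
    simpa [LinearMap.mem_ker, sub_eq_zero] using h
end
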